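/- Let S be an n-simplex in R^n with faces S^i. Suppose {A^1,...,A^{n+1}} and {D^1,...,D^{n+1}} are both families of closed convex subsets of S with S^i ⊆ A^i ⊆ D^i, neither family covering S. If ε₀ and ε₁ are respectively the common distances of the equally spaced points to the families {A^i} and {D^i}, then ε₁ ≤ ε₀. -/

import Mathlib

theorem stmt_7 (n : ℕ) (a : Fin (n + 1) → EuclideanSpace ℝ (Fin n))
    (ha : AffineIndependent ℝ a)
    (S : Set (EuclideanSpace ℝ (Fin n))) (hS : S = convexHull ℝ (Set.range a))
    (face : Fin (n + 1) → Set (EuclideanSpace ℝ (Fin n)))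
    (hface : ∀ i, face i = convexHull ℝ (a '' {j | j ≠ i}))
    (A : Fin (n + 1) → Set (EuclideanSpace ℝ (Fin n)))
    (hAclosed : ∀ i, IsClosed (A i)) (hAconv : ∀ i, Convex ℝ (A i))
    (hAS : ∀ i, A i ⊆ S) (hfaceA : ∀ i, face i ⊆ A i)
    (D : Fin (n + 1) → Set (EuclideanSpace ℝ (Fin n)))
    (hDclosed : ∀ i, IsClosed (D i)) (hDconv : ∀ i, Convex ℝ (D i))
    (hDS : ∀ i, D i ⊆ S) (hAD : ∀ i, A i ⊆ D i)
    (hncA : (S \ ⋃ i, A i).Nonempty) (hncD : (S \ ⋃ i, D i).Nonempty)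
    (v₀ v₁ : EuclideanSpace ℝ (Fin n)) (hv₀ : v₀ ∈ S) (hv₁ : v₁ ∈ S)
    (ε₀ ε₁ : ℝ) (hε₀ : 0 < ε₀) (hε₁ : 0 < ε₁)
    (hd₀ : ∀ i, Metric.infDist v₀ (A i) = ε₀)
    (hd₁ : ∀ i, Metric.infDist v₁ (D i) = ε₁) :
    ε₁ ≤ ε₀ := by
  classical
  -- Basic facts about S
  have hScomp : IsCompact S := by
    rw [hS]; exact (Set.finite_range a).isCompact_convexHull (𝕜 := ℝ)
  have hSclosed : IsClosed S := hScomp.isClosed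
  -- A i is nonempty
  have hAne : ∀ i, (A i).Nonempty := by
    intro i
    rcases Set.eq_empty_or_nonempty (A i) with h | h
    · exfalso
      have := hd₀ i
      rw [h, Metric.infDist_empty] at this
      exact hε₀.ne this
    · exact h
  by_cases hv : v₁ = v₀
  · -- trivial case: same point, and A 0 ⊆ D 0
    have h1 : Metric.infDist v₁ (D 0) ≤ Metric.infDist v₁ (A 0) :=
      Metric.infDist_le_infDist_of_subset (hAD 0) (hAne 0)
    rw [hd₁ 0, hv, hd₀ 0] at h1
    exact h1
  -- main case
  have hvne : v₁ - v₀ ≠ 0 := sub_ne_zero_of_ne hv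
  have hc : (0:ℝ) < ‖v₁ - v₀‖ := norm_pos_iff.mpr hvne
  -- the affine basis
  have htop : affineSpan ℝ (Set.range a) = ⊤ := by
    rw [ha.affineSpan_eq_top_iff_card_eq_finrank_add_one]
    simp [finrank_euclideanSpace_fin]
  let b : AffineBasis (Fin (n + 1)) ℝ (EuclideanSpace ℝ (Fin n)) := ⟨a, ha, htop⟩
  have hbpts : (b : Fin (n+1) → EuclideanSpace ℝ (Fin n)) = a := rfl
  -- the ray
  set w : ℝ → EuclideanSpace ℝ (Fin n) := fun s => v₀ + s • (v₁ - v₀) with hw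
  have hwcont : Continuous w := by
    apply Continuous.add continuous_const
    exact (continuous_id.smul continuous_const)
  set K : Set ℝ := w ⁻¹' S with hK
  have hKclosed : IsClosed K := hSclosed.preimage hwcont
  have h1K : (1:ℝ) ∈ K := by
    simp only [hK, Set.mem_preimage, hw]
    simpa using hv₁
  have hKbdd : K ⊆ Set.Icc (-(Metric.diam S / ‖v₁ - v₀‖)) (Metric.diam S / ‖v₁ - v₀‖) := by
    intro s hs
    have hdist : dist (w s) v₀ ≤ Metric.diam S :=
      Metric.dist_le_diam_of_mem hScomp.isBounded hs hv₀
    have : dist (w s) v₀ = |s| * ‖v₁ - v₀‖ := by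
      simp only [hw, dist_eq_norm]
      rw [add_sub_cancel_left, norm_smul, Real.norm_eq_abs]
    rw [this] at hdist
    have habs : |s| ≤ Metric.diam S / ‖v₁ - v₀‖ := by
      rw [le_div_iff₀ hc]; exact hdist
    exact abs_le.mp habs
  have hKcomp : IsCompact K := isCompact_Icc.of_isClosed_subset hKclosed hKbdd
  have hKne : K.Nonempty := ⟨1, h1K⟩
  set T : ℝ := sSup K with hT
  have hTK : T ∈ K := hKcomp.sSup_mem hKne
  have hT1 : (1:ℝ) ≤ T := le_csSup hKcomp.bddAbove h1K
  have hT0 : (0:ℝ) < T := lt_of_lt_of_le one_pos hT1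
  set x : EuclideanSpace ℝ (Fin n) := w T with hx
  have hxS : x ∈ S := hTK
  -- barycentric coordinates of points in S are nonnegative
  have hnn : ∀ y ∈ S, ∀ i, 0 ≤ b.coord i y := by
    intro y hy i
    have hsub : S ⊆ {z | 0 ≤ b.coord i z} := by
      rw [hS]
      apply convexHull_min
      · rintro _ ⟨j, rfl⟩
        have : b.coord i (a j) = if i = j then 1 else 0 := by
          rw [← hbpts]; exact b.coord_apply i j
        rw [Set.mem_setOf_eq, this]
        split <;> norm_num
      · have : {z | 0 ≤ b.coord i z} = (b.coord i) ⁻¹' Set.Ici 0 := rfl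
        rw [this]
        exact (convex_Ici (0:ℝ)).affine_preimage (b.coord i)
    exact hsub hy
  -- some coordinate of x vanishes
  have hzero : ∃ i, b.coord i x = 0 := by
    by_contra hne
    push_neg at hne
    have hpos : ∀ i, 0 < b.coord i x := fun i =>
      lt_of_le_of_ne (hnn x hxS i) (Ne.symm (hne i))
    have hxint : x ∈ interior S := by
      rw [hS, ← hbpts]
      rw [AffineBasis.interior_convexHull]
      exact hpos
    obtain ⟨δ, hδ, hball⟩ := Metric.isOpen_iff.mp isOpen_interior x hxint
    set e : ℝ := δ / (2 * ‖v₁ - v₀‖) with he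
    have he0 : 0 < e := div_pos hδ (by positivity)
    have hmem : T + e ∈ K := by
      have : dist (w (T + e)) x < δ := by
        simp only [hw, hx, dist_eq_norm]
        have : v₀ + (T + e) • (v₁ - v₀) - (v₀ + T • (v₁ - v₀)) = e • (v₁ - v₀) := by
          module
        rw [this, norm_smul, Real.norm_eq_abs, abs_of_pos he0, he]
        rw [div_mul_eq_mul_div, mul_comm]
        rw [div_lt_iff₀ (by positivity)]
        nlinarith [hc, hδ]
      show w (T + e) ∈ S
      exact interior_subset (hball this)
    have : T + e ≤ T := le_csSup hKcomp.bddAbove hmem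
    linarith
  obtain ⟨i, hi⟩ := hzero
  -- x lies in face i
  have hxface : x ∈ face i := by
    rw [hface]
    set wt : Fin (n+1) → ℝ := fun j => b.coord j x with hwt
    have hsum : ∑ j, wt j = 1 := b.sum_coord_apply_eq_one x
    have hrepr : Finset.univ.affineCombination ℝ a wt = x := by
      rw [← hbpts]; exact b.affineCombination_coord_eq_self x
    have hwi : wt i = 0 := hi
    have hsum' : ∑ j ∈ Finset.univ.erase i, wt j = 1 := by
      rw [Finset.sum_erase _ hwi]; exact hsum
    have hsmul0 : wt i • a i = 0 := by rw [hwi, zero_smul]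
    have hcm : Finset.univ.affineCombination ℝ a wt
        = (Finset.univ.erase i).centerMass wt a := by
      rw [affineCombination_eq_centerMass hsum]
      simp only [Finset.centerMass, hsum, hsum', inv_one, one_smul]
      exact (Finset.sum_erase (f := fun j => wt j • a j) Finset.univ hsmul0).symm
    rw [← hrepr, hcm]
    apply Finset.centerMass_mem_convexHull
    · intro j hj
      exact hnn x hxS j
    · rw [hsum']; norm_num
    · intro j hj
      exact ⟨j, Finset.ne_of_mem_erase hj, rfl⟩
  have hxA : x ∈ A i := hfaceA i hxface
  -- nearest point of A i to v₀
  have hAicomp : IsCompact (A i) := hScomp.of_isClosed_subset (hAclosed i) (hAS i)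
  obtain ⟨p, hpA, hpd⟩ := hAicomp.exists_infDist_eq_dist (hAne i) v₀
  have hpd' : dist v₀ p = ε₀ := by rw [← hpd, hd₀ i]
  -- the point q on segment [x, p]
  set q : EuclideanSpace ℝ (Fin n) := (1/T) • x + ((T-1)/T) • p with hq
  have hqA : q ∈ A i := by
    apply hAconv i hxA hpA
    · positivity
    · apply div_nonneg (by linarith) (le_of_lt hT0)
    · field_simp; ring
  have hqD : q ∈ D i := hAD i hqA
  have hdiff : v₁ - q = ((T-1)/T) • (v₀ - p) := by
    have hxdef : x = v₀ + T • (v₁ - v₀) := rfl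
    rw [hq, hxdef]
    have hTne : T ≠ 0 := ne_of_gt hT0
    match_scalars <;> field_simp <;> ring
  have hdist : dist v₁ q = ((T-1)/T) * ε₀ := by
    rw [dist_eq_norm, hdiff, norm_smul, Real.norm_eq_abs,
      abs_of_nonneg (div_nonneg (by linarith) (le_of_lt hT0))]
    rw [← dist_eq_norm, hpd']
  have h1 : ε₁ ≤ dist v₁ q := by
    rw [← hd₁ i]; exact Metric.infDist_le_dist_of_mem hqD
  have h2 : (T-1)/T ≤ 1 := by
    rw [div_le_one hT0]; linarith
  calc ε₁ ≤ ((T-1)/T) * ε₀ := by rw [← hdist]; exact h1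
    _ ≤ 1 * ε₀ := by apply mul_le_mul_of_nonneg_right h2 (le_of_lt hε₀)
    _ = ε₀ := one_mul ε₀
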